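/- Let W be an additive abelian group and A a commutative ring with a W-grading A = ⊕_{w∈W} A_w. Let w ∈ W be such that n ↦ n•w is injective from ℤ to W, and let s ∈ A be a unit with s ∈ A_w and s⁻¹ ∈ A_{−w}. Let A^{(w)} ⊆ A be the subring consisting of all finite sums of elements of the components A_{n•w}, n ∈ ℤ (the Veronese subring of A with respect to ℤ·w). Then there is a ring isomorphism from the Laurent polynomial ring A_0[T, T^{−1}] onto A^{(w)} sending T to s and restricting to the identity on A_0. -/

import Mathlib

open scoped LaurentPolynomial

/-- If `s` is a unit of a `W`-graded commutative ring with `s ∈ A_w`, `s⁻¹ ∈ A_{-w}` and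
`n ↦ n•w` injective, then the Veronese subring `A^{(w)}` (the finite sums of elements of
the components `A_{n•w}`, `n ∈ ℤ`) is isomorphic to the Laurent polynomial ring
`A_0[T,T⁻¹]` via `T ↦ s`, fixing `A_0`. -/
theorem veronese_of_homogeneous_unit {W A : Type*} [AddCommGroup W] [DecidableEq W]
    [CommRing A] (𝒜 : W → AddSubgroup A) [GradedRing 𝒜] (w : W)
    (hw : Function.Injective fun n : ℤ => n • w)
    (s : Aˣ) (hs : (s : A) ∈ 𝒜 w) (hs' : ((s⁻¹ : Aˣ) : A) ∈ 𝒜 (-w)) :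
    ∃ Ver : Subring A,
      (Ver : Set A) = ↑(AddSubmonoid.closure (⋃ n : ℤ, (𝒜 (n • w) : Set A))) ∧
      ∃ e : (↥(𝒜 0))[T;T⁻¹] ≃+* ↥Ver,
        ((e (LaurentPolynomial.T 1) : ↥Ver) : A) = (s : A) ∧
        ∀ a : ↥(𝒜 0), ((e (LaurentPolynomial.C a) : ↥Ver) : A) = (a : A) := by
  classical
  -- powers of s are homogeneous
  have hpow : ∀ n : ℤ, ((s ^ n : Aˣ) : A) ∈ 𝒜 (n • w) := by
    intro n
    induction n using Int.induction_on with
    | zero => simpa using SetLike.one_mem_graded 𝒜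
    | succ m ih =>
        have h1 : ((m : ℤ) + 1) • w = (m : ℤ) • w + w := by
          rw [add_zsmul, one_zsmul]
        have h2 : (s ^ ((m : ℤ) + 1) : Aˣ) = s ^ (m : ℤ) * s := by
          rw [zpow_add_one]
        rw [h1, h2, Units.val_mul]
        exact SetLike.mul_mem_graded ih hs
    | pred m ih =>
        have h1 : (-(m : ℤ) - 1) • w = (-(m : ℤ)) • w + -w := by
          rw [sub_eq_add_neg, add_zsmul]; abel
        have h2 : (s ^ (-(m : ℤ) - 1) : Aˣ) = s ^ (-(m : ℤ)) * s⁻¹ := by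
          rw [zpow_sub_one]
        rw [h1, h2, Units.val_mul]
        exact SetLike.mul_mem_graded ih hs' 
  set f : ↥(𝒜 0) →+* A :=
    { toFun := fun a => (a : A), map_one' := rfl, map_mul' := fun _ _ => rfl,
      map_zero' := rfl, map_add' := fun _ _ => rfl } with hf
  set g : Multiplicative ℤ →* A := (Units.coeHom A).comp (zpowersHom Aˣ s) with hg
  set φ : (↥(𝒜 0))[T;T⁻¹] →+* A :=
    AddMonoidAlgebra.liftNCRingHom f g (fun _ _ => Commute.all _ _) with hφ
  have φ_single : ∀ (n : ℤ) (a : ↥(𝒜 0)),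
      φ (AddMonoidAlgebra.single n a) = (a : A) * ((s ^ n : Aˣ) : A) := by
    intro n a
    exact AddMonoidAlgebra.liftNC_single _ _ _ _
  have mem_term : ∀ (n : ℤ) (a : ↥(𝒜 0)), (a : A) * ((s ^ n : Aˣ) : A) ∈ 𝒜 (n • w) := by
    intro n a
    simpa using SetLike.mul_mem_graded a.2 (hpow n)
  -- injectivity of φ
  have hinj : Function.Injective φ := by
    rw [injective_iff_map_eq_zero]
    intro p hp
    refine AddMonoidAlgebra.ext (Finsupp.ext fun n => ?_)
    rw [AddMonoidAlgebra.coeff_zero, Finsupp.coe_zero, Pi.zero_apply]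
    by_contra hn
    have hmem : n ∈ p.coeff.support := Finsupp.mem_support_iff.mpr hn
    have hsum : φ p = ∑ m ∈ p.coeff.support, (p.coeff m : A) * ((s ^ m : Aˣ) : A) := by
      conv_lhs => rw [← AddMonoidAlgebra.sum_coeff_single p]
      rw [Finsupp.sum, map_sum]
      exact Finset.sum_congr rfl fun m _ => φ_single m (p.coeff m)
    have h0 : (GradedRing.proj 𝒜 (n • w)) (φ p) = (p.coeff n : A) * ((s ^ n : Aˣ) : A) := by
      rw [hsum, map_sum]
      rw [Finset.sum_eq_single n]
      · rw [GradedRing.proj_apply]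
        exact DirectSum.decompose_of_mem_same 𝒜 (mem_term n (p.coeff n))
      · intro m _ hmn
        rw [GradedRing.proj_apply]
        exact DirectSum.decompose_of_mem_ne 𝒜 (mem_term m (p.coeff m))
          (fun h => hmn (hw h))
      · intro h; exact absurd hmem h
    rw [hp, map_zero] at h0
    exact hn (Subtype.ext ((Units.mul_left_eq_zero (s ^ n)).mp h0.symm))
  refine ⟨φ.range, ?_, ?_⟩
  · apply le_antisymm
    · rintro x ⟨p, rfl⟩
      have : φ p = ∑ m ∈ p.coeff.support, (p.coeff m : A) * ((s ^ m : Aˣ) : A) := by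
        conv_lhs => rw [← AddMonoidAlgebra.sum_coeff_single p]
        rw [Finsupp.sum, map_sum]
        exact Finset.sum_congr rfl fun m _ => φ_single m (p.coeff m)
      rw [this]
      exact AddSubmonoid.sum_mem _ fun m _ => AddSubmonoid.subset_closure
        (Set.mem_iUnion.mpr ⟨m, mem_term m (p.coeff m)⟩)
    · intro x hx
      refine AddSubmonoid.closure_induction ?_ ?_ ?_ hx
      · rintro a ha
        obtain ⟨n, hn⟩ := Set.mem_iUnion.mp ha
        have ha0 : a * ((s ^ (-n) : Aˣ) : A) ∈ 𝒜 0 := by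
          simpa using SetLike.mul_mem_graded hn (hpow (-n))
        refine ⟨AddMonoidAlgebra.single n ⟨a * ((s ^ (-n) : Aˣ) : A), ha0⟩, ?_⟩
        rw [φ_single]
        push_cast
        rw [mul_assoc, ← Units.val_mul, ← zpow_add, neg_add_cancel, zpow_zero,
          Units.val_one, mul_one]
      · exact ⟨0, map_zero φ⟩
      · rintro a b - - ⟨p, rfl⟩ ⟨q, rfl⟩
        exact ⟨p + q, map_add φ p q⟩
  · refine ⟨RingEquiv.ofBijective φ.rangeRestrict
      ⟨fun a b h => hinj (congrArg Subtype.val h), φ.rangeRestrict_surjective⟩, ?_, ?_⟩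
    · show (φ (LaurentPolynomial.T 1) : A) = (s : A)
      have hT : (LaurentPolynomial.T 1 : (↥(𝒜 0))[T;T⁻¹]) = AddMonoidAlgebra.single 1 1 := rfl
      rw [hT, φ_single]
      simp
    · intro a
      show (φ (LaurentPolynomial.C a) : A) = (a : A)
      rw [← LaurentPolynomial.single_eq_C, φ_single]
      simp
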